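/- Fix a real κ with 4 < κ < 8. For every α ∈ (0,1] and every x ∈ (0,1], one has α^{1−4/κ} · ∫₀^x (1−α·u)^{8/κ−2}·u^{−4/κ} du ≤ B(1−4/κ, 8/κ−1), where B is the Beta function; in particular the left-hand side integral is finite. -/

import Mathlib

open MeasureTheory

lemma real_beta_aux {a b : ℝ} (ha : 0 < a) (hb : 0 < b) :
    IntegrableOn (fun t : ℝ => t ^ (a-1) * (1-t) ^ (b-1)) (Set.Ioc 0 1) ∧
    ∫ t in Set.Ioc (0:ℝ) 1, t ^ (a-1) * (1-t) ^ (b-1)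
      = Real.Gamma a * Real.Gamma b / Real.Gamma (a+b) := by
  have hF : IntervalIntegrable
      (fun x : ℝ => (x:ℂ) ^ ((a:ℂ)-1) * (1-(x:ℂ)) ^ ((b:ℂ)-1)) volume 0 1 :=
    Complex.betaIntegral_convergent (by simpa using ha) (by simpa using hb)
  have hF' : IntegrableOn
      (fun x : ℝ => (x:ℂ) ^ ((a:ℂ)-1) * (1-(x:ℂ)) ^ ((b:ℂ)-1)) (Set.Ioc 0 1) := by
    rw [← intervalIntegrable_iff_integrableOn_Ioc_of_le (by norm_num)]
    exact hF
  have heq : ∀ t ∈ Set.Ioc (0:ℝ) 1,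
      ((t ^ (a-1) * (1-t) ^ (b-1) : ℝ) : ℂ) = (t:ℂ) ^ ((a:ℂ)-1) * (1-(t:ℂ)) ^ ((b:ℂ)-1) := by
    intro t ht
    push_cast [Complex.ofReal_cpow ht.1.le,
      Complex.ofReal_cpow (by linarith [ht.2] : (0:ℝ) ≤ 1 - t)]
    ring
  have hae : (fun t : ℝ => (t:ℂ) ^ ((a:ℂ)-1) * (1-(t:ℂ)) ^ ((b:ℂ)-1))
      =ᵐ[volume.restrict (Set.Ioc (0:ℝ) 1)]
      (fun t : ℝ => ((t ^ (a-1) * (1-t) ^ (b-1) : ℝ) : ℂ)) := by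
    filter_upwards [ae_restrict_mem measurableSet_Ioc] with t ht
    exact (heq t ht).symm
  have hInt : IntegrableOn (fun t : ℝ => t ^ (a-1) * (1-t) ^ (b-1)) (Set.Ioc 0 1) := by
    have := (hF'.congr_fun_ae hae).re
    simpa [IntegrableOn] using this
  refine ⟨hInt, ?_⟩
  have hG : Complex.Gamma a * Complex.Gamma b
      = Complex.Gamma ((a:ℂ)+(b:ℂ)) * Complex.betaIntegral a b :=
    Complex.Gamma_mul_Gamma_eq_betaIntegral (by simpa using ha) (by simpa using hb)
  have hbeta : Complex.betaIntegral (a:ℂ) (b:ℂ)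
      = ((∫ t in Set.Ioc (0:ℝ) 1, t ^ (a-1) * (1-t) ^ (b-1) : ℝ) : ℂ) := by
    rw [Complex.betaIntegral,
      intervalIntegral.integral_of_le (by norm_num : (0:ℝ) ≤ 1),
      integral_congr_ae hae]
    exact integral_ofReal
  rw [hbeta, ← Complex.ofReal_add, Complex.Gamma_ofReal, Complex.Gamma_ofReal,
    Complex.Gamma_ofReal, ← Complex.ofReal_mul, ← Complex.ofReal_mul] at hG
  have hreal : Real.Gamma a * Real.Gamma b
      = Real.Gamma (a+b) * ∫ t in Set.Ioc (0:ℝ) 1, t ^ (a-1) * (1-t) ^ (b-1) := by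
    exact_mod_cast hG
  have hpos : 0 < Real.Gamma (a+b) := Real.Gamma_pos_of_pos (by linarith)
  field_simp [hreal]
  linarith [hreal]

/-- For κ ∈ (4,8), α ∈ (0,1], x ∈ (0,1]:
α^{1−4/κ}·∫₀^x (1−αu)^{8/κ−2}·u^{−4/κ} du ≤ B(1−4/κ, 8/κ−1); in particular the
integral is finite. -/
theorem stmt_4 (κ : ℝ) (h1 : 4 < κ) (h2 : κ < 8) (α x : ℝ)
    (hα : α ∈ Set.Ioc (0:ℝ) 1) (hx : x ∈ Set.Ioc (0:ℝ) 1) :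
    IntegrableOn (fun u : ℝ => (1 - α * u) ^ (8/κ - 2) * u ^ (-(4/κ))) (Set.Ioc 0 x) ∧
    α ^ (1 - 4/κ) * ∫ u in Set.Ioc (0:ℝ) x, (1 - α * u) ^ (8/κ - 2) * u ^ (-(4/κ))
      ≤ Real.Gamma (1 - 4/κ) * Real.Gamma (8/κ - 1)
          / Real.Gamma ((1 - 4/κ) + (8/κ - 1)) := by
  obtain ⟨hα0, hα1⟩ := hα
  obtain ⟨hx0, hx1⟩ := hx
  have hκ0 : (0:ℝ) < κ := by linarith
  set a : ℝ := 1 - 4/κ with hadef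
  set b : ℝ := 8/κ - 1 with hbdef
  have ha : 0 < a := by
    have : 4/κ < 1 := (div_lt_one hκ0).mpr h1
    rw [hadef]; linarith
  have hb : 0 < b := by
    have : 1 < 8/κ := (one_lt_div hκ0).mpr h2
    rw [hbdef]; linarith
  have ea : a - 1 = -(4/κ) := by rw [hadef]; ring
  have eb : b - 1 = 8/κ - 2 := by rw [hbdef]; ring
  obtain ⟨hgInt, hgval⟩ := real_beta_aux ha hb
  set g : ℝ → ℝ := fun t => t ^ (a-1) * (1-t) ^ (b-1) with hgdef
  have hαx1 : α * x ≤ 1 := mul_le_one₀ hα1 hx0.le hx1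
  have hαx0 : 0 < α * x := mul_pos hα0 hx0
  have hII : IntervalIntegrable g volume 0 1 := by
    rw [intervalIntegrable_iff_integrableOn_Ioc_of_le (by norm_num)]
    exact hgInt
  have hII2 : IntervalIntegrable g volume 0 (α*x) := by
    apply hII.mono_set
    rw [Set.uIcc_of_le hαx0.le, Set.uIcc_of_le (by norm_num : (0:ℝ) ≤ 1)]
    exact Set.Icc_subset_Icc le_rfl hαx1
  have hII3 : IntervalIntegrable (fun u => g (α*u)) volume 0 x := by
    have := hII2.comp_mul_left (c := α)
    simpa [zero_div, mul_div_cancel_left₀ _ hα0.ne'] using this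
  have hfeq : Set.EqOn (fun u : ℝ => (1 - α * u) ^ (8/κ - 2) * u ^ (-(4/κ)))
      (fun u => α ^ (1-a) * g (α*u)) (Set.Ioc 0 x) := by
    intro u hu
    simp only [hgdef]
    rw [Real.mul_rpow hα0.le hu.1.le, ea, eb]
    rw [show α ^ (1-a) * (α ^ (-(4/κ)) * u ^ (-(4/κ)) * (1 - α*u) ^ (8/κ-2))
      = (α ^ (1-a) * α ^ (-(4/κ))) * (u ^ (-(4/κ)) * (1 - α*u) ^ (8/κ-2)) by ring,
      ← Real.rpow_add hα0]
    have : 1 - a + -(4/κ) = 0 := by rw [hadef]; ring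
    rw [this, Real.rpow_zero, one_mul]
    ring
  have hIntf : IntegrableOn (fun u : ℝ => (1 - α * u) ^ (8/κ - 2) * u ^ (-(4/κ)))
      (Set.Ioc 0 x) := by
    have h : IntegrableOn (fun u => α ^ (1-a) * g (α*u)) (Set.Ioc 0 x) := by
      rw [← intervalIntegrable_iff_integrableOn_Ioc_of_le hx0.le]
      exact hII3.const_mul _
    exact h.congr_fun hfeq.symm measurableSet_Ioc
  refine ⟨hIntf, ?_⟩
  have hval : ∫ u in Set.Ioc (0:ℝ) x, (1 - α * u) ^ (8/κ - 2) * u ^ (-(4/κ))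
      = α ^ (1-a) * (α⁻¹ * ∫ t in Set.Ioc (0:ℝ) (α*x), g t) := by
    rw [setIntegral_congr_fun measurableSet_Ioc hfeq, integral_const_mul]
    congr 1
    have := intervalIntegral.integral_comp_mul_left g hα0.ne' (a := 0) (b := x)
    rw [intervalIntegral.integral_of_le hx0.le] at this
    rw [this, mul_zero, intervalIntegral.integral_of_le hαx0.le, smul_eq_mul]
  rw [hval]
  have hcoef : α ^ a * (α ^ (1-a) * α⁻¹) = 1 := by
    rw [← mul_assoc, ← Real.rpow_add hα0, show a + (1-a) = 1 by ring, Real.rpow_one,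
      mul_inv_cancel₀ hα0.ne']
  calc α ^ a * (α ^ (1-a) * (α⁻¹ * ∫ t in Set.Ioc (0:ℝ) (α*x), g t))
      = (α ^ a * (α ^ (1-a) * α⁻¹)) * ∫ t in Set.Ioc (0:ℝ) (α*x), g t := by ring
    _ = ∫ t in Set.Ioc (0:ℝ) (α*x), g t := by rw [hcoef, one_mul]
    _ ≤ ∫ t in Set.Ioc (0:ℝ) 1, g t := by
        apply setIntegral_mono_set hgInt
        · filter_upwards [ae_restrict_mem measurableSet_Ioc] with t ht
          exact mul_nonneg (Real.rpow_nonneg ht.1.le _)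
            (Real.rpow_nonneg (by linarith [ht.2]) _)
        · exact HasSubset.Subset.eventuallyLE (Set.Ioc_subset_Ioc le_rfl hαx1)
    _ = Real.Gamma a * Real.Gamma b / Real.Gamma (a+b) := hgval
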